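/- Let p be a real polynomial of degree m ≥ 1, let r > 0, and define u_ε(x) = p(x/ε^r) for ε ∈ (0,1] and x ∈ ℝ. Then for s ∈ ℝ, the family (u_ε)_{ε∈(0,1]} satisfies the local Zygmund estimates of order s on ℝ if and only if s ≤ −rm. -/

import Mathlib

open MeasureTheory SchwartzMap Filter
open scoped FourierTransform Topology

noncomputable section

/-- A family `(u_ε)` of functions on `ℝ` satisfies the local Zygmund estimates of order `s`
(on `Ω = ℝ`): for every compact `K` and every derivative order `k`, as `ε → 0⁺`,
`sup_{x ∈ K} ‖u_ε^{(k)}(x)‖` is `O(1)` for `k < s`, `O(log(1/ε))` for `k = s` and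
`O(ε^{s-k})` for `k > s`. -/
def ZygLoc1 {F : Type*} [NormedAddCommGroup F] [NormedSpace ℝ F]
    (s : ℝ) (u : ℝ → ℝ → F) : Prop :=
  ∀ K : Set ℝ, IsCompact K → ∀ k : ℕ,
    (((k : ℕ) : ℝ) < s →
      ∃ C, ∀ᶠ ε in 𝓝[>] (0:ℝ), ∀ x ∈ K, ‖iteratedDeriv k (u ε) x‖ ≤ C) ∧
    ((((k : ℕ) : ℝ) = s →
      ∃ C, ∀ᶠ ε in 𝓝[>] (0:ℝ), ∀ x ∈ K, ‖iteratedDeriv k (u ε) x‖ ≤ C * Real.log (1/ε))) ∧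
    (s < ((k : ℕ) : ℝ) →
      ∃ C, ∀ᶠ ε in 𝓝[>] (0:ℝ), ∀ x ∈ K, ‖iteratedDeriv k (u ε) x‖ ≤ C * ε ^ (s - (k : ℕ)))

namespace ZygAux

open Polynomial Real

lemma tendsto_rpow_pos {a : ℝ} (ha : 0 < a) :
    Tendsto (fun ε : ℝ => ε ^ a) (𝓝[>] (0:ℝ)) (𝓝 0) := by
  have h : Tendsto (fun ε : ℝ => ε ^ a) (𝓝 (0:ℝ)) (𝓝 ((0:ℝ) ^ a)) :=
    (Real.continuousAt_rpow_const 0 a (Or.inr ha.le)).tendsto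
  rw [Real.zero_rpow ha.ne'] at h
  exact h.mono_left nhdsWithin_le_nhds

lemma iteratedDeriv_eval_mul (p : Polynomial ℝ) (c : ℝ) (k : ℕ) :
    iteratedDeriv k (fun x : ℝ => p.eval (c * x)) =
      fun x => c ^ k * (Polynomial.derivative^[k] p).eval (c * x) := by
  induction k with
  | zero => simp
  | succ k ih =>
    rw [iteratedDeriv_succ, ih]
    funext x
    have h1 : HasDerivAt (fun x : ℝ => (Polynomial.derivative^[k] p).eval (c * x))
        (c * (Polynomial.derivative^[k+1] p).eval (c * x)) x := by
      have := (Polynomial.hasDerivAt (Polynomial.derivative^[k] p) (c * x)).comp x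
        ((hasDerivAt_id x).const_mul c)
      simpa [Function.comp_def, Function.iterate_succ_apply', mul_comm] using this
    have h2 := h1.const_mul (c ^ k)
    rw [h2.deriv]
    ring

lemma eval_abs_le (q : Polynomial ℝ) (y : ℝ) :
    |q.eval y| ≤ (∑ i ∈ Finset.range (q.natDegree + 1), |q.coeff i|) *
      max 1 |y| ^ q.natDegree := by
  rw [Polynomial.eval_eq_sum_range]
  refine (Finset.abs_sum_le_sum_abs _ _).trans ?_
  rw [Finset.sum_mul]
  apply Finset.sum_le_sum
  intro i hi
  rw [abs_mul, abs_pow]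
  have h1 : |y| ^ i ≤ max 1 |y| ^ q.natDegree :=
    (pow_le_pow_left₀ (abs_nonneg y) (le_max_right 1 |y|) i).trans
      (pow_le_pow_right₀ (le_max_left 1 |y|) (Finset.mem_range_succ_iff.mp hi))
  exact mul_le_mul_of_nonneg_left h1 (abs_nonneg _)

end ZygAux

/-- for a real polynomial `p` of degree `m ≥ 1` and `r > 0`, the family
`u_ε(x) = p(x/ε^r)` satisfies the local Zygmund estimates of order `s` iff `s ≤ -rm`. -/
theorem polynomial_scaled_zygLoc_iff (p : Polynomial ℝ) (m : ℕ) (hm : 1 ≤ m)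
    (hdeg : p.natDegree = m) (r : ℝ) (hr : 0 < r) (s : ℝ) :
    ZygLoc1 s (fun ε x => p.eval (x / ε ^ r)) ↔ s ≤ -(r * m) := by
  have hm' : (0:ℝ) < m := by exact_mod_cast hm
  have hrm : 0 < r * m := mul_pos hr hm'
  constructor
  · -- forward: ZygLoc1 → s ≤ -(r*m)
    intro h
    by_contra hs
    push_neg at hs  -- hs : -(r*m) < s
    -- lower bound for |p.eval ((ε^r)⁻¹)|
    have hp0 : p ≠ 0 := fun h0 => by simp [h0] at hdeg; omega
    have hL : p.leadingCoeff ≠ 0 := Polynomial.leadingCoeff_ne_zero.mpr hp0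
    have hLpos : 0 < |p.leadingCoeff| := abs_pos.mpr hL
    have hT : Tendsto (fun ε : ℝ => (ε ^ r)⁻¹) (𝓝[>] (0:ℝ)) atTop := by
      apply tendsto_inv_nhdsGT_zero.comp
      rw [tendsto_nhdsWithin_iff]
      refine ⟨ZygAux.tendsto_rpow_pos hr, ?_⟩
      filter_upwards [self_mem_nhdsWithin] with ε hε
      exact Real.rpow_pos_of_pos hε r
    have hequiv := p.isEquivalent_atTop_lead
    have hlittle : ∀ᶠ t in atTop,
        ‖Polynomial.eval t p - p.leadingCoeff * t ^ p.natDegree‖ ≤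
          1/2 * ‖p.leadingCoeff * t ^ p.natDegree‖ := by
      have := hequiv.def (by norm_num : (0:ℝ) < 1/2)
      simpa [Pi.sub_apply] using this
    have hlow : ∀ᶠ t in atTop, |p.leadingCoeff| / 2 * |t| ^ m ≤ |Polynomial.eval t p| := by
      filter_upwards [hlittle] with t ht
      have h1 : |p.leadingCoeff * t ^ p.natDegree| = |p.leadingCoeff| * |t| ^ m := by
        rw [abs_mul, abs_pow, hdeg]
      have h4 := abs_sub_abs_le_abs_sub (p.leadingCoeff * t ^ p.natDegree) (Polynomial.eval t p)
      rw [abs_sub_comm] at h4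
      simp only [Real.norm_eq_abs] at ht
      rw [h1] at h4 ht
      linarith
    have hlow' : ∀ᶠ ε in 𝓝[>] (0:ℝ),
        |p.leadingCoeff| / 2 * ε ^ (-(r * m)) ≤ |Polynomial.eval ((ε ^ r)⁻¹) p| := by
      filter_upwards [hT.eventually hlow, self_mem_nhdsWithin] with ε hε (hε0 : 0 < ε)
      have hεr : 0 < ε ^ r := Real.rpow_pos_of_pos hε0 r
      have habs : |(ε ^ r)⁻¹| = (ε ^ r)⁻¹ := abs_of_pos (by positivity)
      have hpow : ((ε ^ r)⁻¹) ^ m = ε ^ (-(r * m)) := by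
        rw [← Real.rpow_neg hε0.le, ← Real.rpow_natCast (ε ^ (-r)) m,
          ← Real.rpow_mul hε0.le, neg_mul]
      rw [habs, hpow] at hε
      exact hε
    -- bound from Zygmund hypothesis at K = {1}, k = 0
    obtain ⟨h0, h1, h2⟩ := h {1} isCompact_singleton 0
    -- unify: get C and g with bound and tendsto
    have key : ∃ C : ℝ, ∃ g : ℝ → ℝ,
        (∀ᶠ ε in 𝓝[>] (0:ℝ), |Polynomial.eval ((ε ^ r)⁻¹) p| ≤ C * g ε) ∧
        Tendsto (fun ε => C * g ε * ε ^ (r * m)) (𝓝[>] (0:ℝ)) (𝓝 0) := by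
      rcases lt_trichotomy s 0 with hs0 | hs0 | hs0
      · -- s < 0 : use third clause
        obtain ⟨C, hC⟩ := h2 (by simpa using hs0)
        refine ⟨C, fun ε => ε ^ s, ?_, ?_⟩
        · filter_upwards [hC, self_mem_nhdsWithin] with ε hε (hε0 : 0 < ε)
          have := hε 1 rfl
          simpa [iteratedDeriv_zero, one_div, Real.norm_eq_abs] using this
        · have : Tendsto (fun ε : ℝ => C * ε ^ (s + r * m)) (𝓝[>] (0:ℝ)) (𝓝 (C * 0)) :=
            (ZygAux.tendsto_rpow_pos (by linarith)).const_mul C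
          rw [mul_zero] at this
          refine this.congr' ?_
          filter_upwards [self_mem_nhdsWithin] with ε (hε0 : 0 < ε)
          rw [Real.rpow_add hε0, mul_assoc]
      · -- s = 0 : use second clause
        obtain ⟨C, hC⟩ := h1 (by simpa using hs0.symm)
        refine ⟨C, fun ε => Real.log (1/ε), ?_, ?_⟩
        · filter_upwards [hC] with ε hε
          have := hε 1 rfl
          simpa [iteratedDeriv_zero, one_div, Real.norm_eq_abs] using this
        · have h3 : Tendsto (fun ε : ℝ => -C * (Real.log ε * ε ^ (r * m)))
              (𝓝[>] (0:ℝ)) (𝓝 (-C * 0)) :=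
            (tendsto_log_mul_rpow_nhdsGT_zero hrm).const_mul (-C)
          rw [mul_zero] at h3
          refine h3.congr fun ε => ?_
          simp only [one_div, Real.log_inv]
          ring
      · -- 0 < s : use first clause
        obtain ⟨C, hC⟩ := h0 (by simpa using hs0)
        refine ⟨C, fun _ => 1, ?_, ?_⟩
        · filter_upwards [hC] with ε hε
          have := hε 1 rfl
          simpa [iteratedDeriv_zero, one_div, Real.norm_eq_abs] using this
        · have : Tendsto (fun ε : ℝ => C * 1 * ε ^ (r * m)) (𝓝[>] (0:ℝ)) (𝓝 (C * 1 * 0)) :=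
            (ZygAux.tendsto_rpow_pos hrm).const_mul (C * 1)
          rwa [mul_zero] at this
    obtain ⟨C, g, hbound, htend⟩ := key
    have hsmall : ∀ᶠ ε in 𝓝[>] (0:ℝ), C * g ε * ε ^ (r * m) < |p.leadingCoeff| / 2 :=
      htend.eventually_lt_const (by positivity)
    have : ∃ ε : ℝ, (|p.leadingCoeff| / 2 * ε ^ (-(r * m)) ≤ |Polynomial.eval ((ε ^ r)⁻¹) p| ∧
        |Polynomial.eval ((ε ^ r)⁻¹) p| ≤ C * g ε) ∧
        (C * g ε * ε ^ (r * m) < |p.leadingCoeff| / 2 ∧ 0 < ε) :=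
      ((hlow'.and hbound).and (hsmall.and self_mem_nhdsWithin)).exists
    obtain ⟨ε, ⟨hle1, hle2⟩, hlt, hε0⟩ := this
    have hεrm : 0 < ε ^ (r * m) := Real.rpow_pos_of_pos hε0 _
    have hmain : |p.leadingCoeff| / 2 * ε ^ (-(r * m)) * ε ^ (r * m) ≤
        C * g ε * ε ^ (r * m) :=
      mul_le_mul_of_nonneg_right (hle1.trans hle2) hεrm.le
    rw [mul_assoc, ← Real.rpow_add hε0, neg_add_cancel, Real.rpow_zero, mul_one] at hmain
    linarith
  · -- backward: s ≤ -(r*m) → ZygLoc1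
    intro hs K hK k
    have hs0 : s < 0 := lt_of_le_of_lt hs (by linarith)
    have hks : s < (k : ℝ) := lt_of_lt_of_le hs0 (by exact_mod_cast Nat.zero_le k)
    have hk0 : (0:ℝ) ≤ (k:ℝ) := Nat.cast_nonneg k
    refine ⟨fun hlt => absurd hlt (not_lt.mpr (le_of_lt (lt_of_lt_of_le hs0 hk0))),
      fun heq => absurd (heq ▸ hk0 : (0:ℝ) ≤ s) (not_le.mpr hs0), fun _ => ?_⟩
    obtain ⟨R, hR⟩ := hK.isBounded.subset_closedBall 0
    set R' : ℝ := max 1 R with hR'def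
    have hR'1 : (1:ℝ) ≤ R' := le_max_left 1 R
    by_cases hkm : m < k
    · -- derivative vanishes
      refine ⟨1, ?_⟩
      filter_upwards [self_mem_nhdsWithin] with ε (hε0 : 0 < ε) x hx
      have hq0 : Polynomial.derivative^[k] p = 0 :=
        Polynomial.iterate_derivative_eq_zero (hdeg ▸ hkm)
      have hfun : (fun x : ℝ => p.eval (x / ε ^ r)) = fun x => p.eval ((ε ^ r)⁻¹ * x) := by
        funext y; rw [div_eq_inv_mul]
      rw [hfun, ZygAux.iteratedDeriv_eval_mul, hq0]
      simp only [Polynomial.eval_zero, mul_zero, norm_zero, one_mul]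
      positivity
    · push_neg at hkm  -- k ≤ m
      set q : Polynomial ℝ := Polynomial.derivative^[k] p with hq
      set S : ℝ := ∑ i ∈ Finset.range (q.natDegree + 1), |q.coeff i| with hS
      have hS0 : 0 ≤ S := Finset.sum_nonneg fun i _ => abs_nonneg _
      refine ⟨S * R' ^ (m - k), ?_⟩
      filter_upwards [Ioo_mem_nhdsGT_of_mem (Set.left_mem_Ico.2 one_pos)] with ε hε x hx
      obtain ⟨hε0, hε1⟩ := hε
      set c : ℝ := (ε ^ r)⁻¹ with hc
      have hεr : 0 < ε ^ r := Real.rpow_pos_of_pos hε0 r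
      have hεr1 : ε ^ r ≤ 1 := Real.rpow_le_one hε0.le hε1.le hr.le
      have hc1 : 1 ≤ c := (one_le_inv₀ hεr).mpr hεr1
      have hc0 : 0 < c := lt_of_lt_of_le one_pos hc1
      have hfun : (fun x : ℝ => p.eval (x / ε ^ r)) = fun x => p.eval (c * x) := by
        funext y; rw [div_eq_inv_mul]
      rw [hfun, ZygAux.iteratedDeriv_eval_mul]
      have hxR : |x| ≤ R' := le_trans (by simpa using hR hx) (le_max_right 1 R)
      have hcx : max 1 |c * x| ≤ c * R' := by
        refine max_le ?_ ?_
        · nlinarith [mul_nonneg (sub_nonneg.2 hc1) (sub_nonneg.2 hR'1)]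
        · rw [abs_mul, abs_of_pos hc0]
          exact mul_le_mul_of_nonneg_left hxR hc0.le
      have hdq : q.natDegree ≤ m - k := hdeg ▸ Polynomial.natDegree_iterate_derivative p k
      have heval : |q.eval (c * x)| ≤ S * (c * R') ^ (m - k) := by
        refine (ZygAux.eval_abs_le q (c * x)).trans ?_
        refine mul_le_mul_of_nonneg_left ?_ hS0
        calc max 1 |c * x| ^ q.natDegree ≤ (c * R') ^ q.natDegree := by
              exact pow_le_pow_left₀ (le_trans zero_le_one (le_max_left _ _)) hcx _
          _ ≤ (c * R') ^ (m - k) :=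
              pow_le_pow_right₀ (le_trans hc1 (le_mul_of_one_le_right hc0.le hR'1)) hdq
      have hnorm : ‖c ^ k * q.eval (c * x)‖ ≤ S * R' ^ (m - k) * c ^ m := by
        rw [Real.norm_eq_abs, abs_mul, abs_pow, abs_of_pos hc0]
        calc c ^ k * |q.eval (c * x)| ≤ c ^ k * (S * (c * R') ^ (m - k)) :=
              mul_le_mul_of_nonneg_left heval (pow_nonneg hc0.le k)
          _ = S * R' ^ (m - k) * (c ^ k * c ^ (m - k)) := by rw [mul_pow]; ring
          _ = S * R' ^ (m - k) * c ^ m := by rw [← pow_add, Nat.add_sub_cancel' hkm]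
      refine hnorm.trans ?_
      have hcm : c ^ m = ε ^ (-(r * (m:ℕ))) := by
        rw [hc, ← Real.rpow_neg hε0.le, ← Real.rpow_natCast (ε ^ (-r)) m,
          ← Real.rpow_mul hε0.le, neg_mul]
      rw [hcm]
      refine mul_le_mul_of_nonneg_left ?_ (by positivity)
      exact Real.rpow_le_rpow_of_exponent_ge hε0 hε1.le (by linarith)
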